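/- Let G1 ∈ ℝ^{n×n} be symmetric positive definite and G2 ∈ ℝ^{n×n} be symmetric positive semidefinite. Then G1 + G2 is symmetric positive definite, and for every i = 1, 2, …, n, λ_i(chol(G1 + G2)) ≥ λ_i(chol(G1)). -/

import Mathlib

open Matrix

noncomputable section

/-- Euclidean norm of a real vector. -/
def euclNorm {m : ℕ} (x : Fin m → ℝ) : ℝ := Real.sqrt (∑ k, x k ^ 2)

/-- The lattice vector `A z` for an integer vector `z`. -/
def latticeVec {m n : ℕ} (A : Matrix (Fin m) (Fin n) ℝ) (z : Fin n → ℤ) : Fin m → ℝ :=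
  A.mulVec fun k => (z k : ℝ)

/-- The `i`-th successive minimum of the lattice generated by `A`: the smallest `r ≥ 0` such
that the closed ball of radius `r` centered at the origin contains `i` linearly independent
lattice vectors. -/
def succMin {m n : ℕ} (A : Matrix (Fin m) (Fin n) ℝ) (i : ℕ) : ℝ :=
  sInf {r : ℝ | 0 ≤ r ∧ ∃ v : Fin i → (Fin n → ℤ),
    LinearIndependent ℝ (fun j => latticeVec A (v j)) ∧
    ∀ j, euclNorm (latticeVec A (v j)) ≤ r}

/-- `R` is the Cholesky factor of `G`: `R` is upper triangular with positive diagonal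
entries and `Rᵀ * R = G`. -/
def IsCholesky {n : ℕ} (G R : Matrix (Fin n) (Fin n) ℝ) : Prop :=
  R.BlockTriangular id ∧ (∀ j, 0 < R j j) ∧ Rᵀ * R = G

-- aux lemmas
lemma chol_inj {n : ℕ} {G R : Matrix (Fin n) (Fin n) ℝ} (h : IsCholesky G R) :
    Function.Injective R.mulVec := by
  refine Matrix.mulVec_injective_iff_isUnit.2 ?_
  rw [Matrix.isUnit_iff_isUnit_det, Matrix.det_of_upperTriangular h.1]
  exact (Finset.prod_pos fun j _ => h.2.1 j).ne'.isUnit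

lemma sum_sq_mulVec {n : ℕ} (R : Matrix (Fin n) (Fin n) ℝ) (y : Fin n → ℝ) :
    ∑ k, (R.mulVec y) k ^ 2 = y ⬝ᵥ ((Rᵀ * R).mulVec y) := by
  rw [← Matrix.mulVec_mulVec, Matrix.dotProduct_mulVec, Matrix.vecMul_transpose]
  simp [dotProduct, sq]

theorem statement1 {n : ℕ} (G1 G2 : Matrix (Fin n) (Fin n) ℝ)
    (hG1 : G1.PosDef) (hG2 : G2.PosSemidef) :
    (G1 + G2).PosDef ∧
      ∀ R1 R3 : Matrix (Fin n) (Fin n) ℝ,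
        IsCholesky G1 R1 → IsCholesky (G1 + G2) R3 →
        ∀ i : ℕ, 1 ≤ i → i ≤ n → succMin R1 i ≤ succMin R3 i := by
  refine ⟨hG1.add_posSemidef hG2, ?_⟩
  intro R1 R3 h1 h3 i hi1 hin
  -- norm comparison
  have hnorm : ∀ z : Fin n → ℤ, euclNorm (latticeVec R1 z) ≤ euclNorm (latticeVec R3 z) := by
    intro z
    apply Real.sqrt_le_sqrt
    simp only [latticeVec, sum_sq_mulVec, h1.2.2, h3.2.2, Matrix.add_mulVec, dotProduct_add]
    have := hG2.dotProduct_mulVec_nonneg (fun k => (z k : ℝ))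
    simp only [star_trivial, RCLike.re_to_real] at this
    linarith [this]
  have subset : {r : ℝ | 0 ≤ r ∧ ∃ v : Fin i → (Fin n → ℤ),
      LinearIndependent ℝ (fun j => latticeVec R3 (v j)) ∧
      ∀ j, euclNorm (latticeVec R3 (v j)) ≤ r} ⊆
      {r : ℝ | 0 ≤ r ∧ ∃ v : Fin i → (Fin n → ℤ),
      LinearIndependent ℝ (fun j => latticeVec R1 (v j)) ∧
      ∀ j, euclNorm (latticeVec R1 (v j)) ≤ r} := by
    rintro r ⟨hr, v, hli, hb⟩
    refine ⟨hr, v, ?_, fun j => (hnorm (v j)).trans (hb j)⟩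
    have heq3 : (fun j => latticeVec R3 (v j)) =
        R3.mulVecLin ∘ (fun j k => ((v j k : ℝ))) := by
      funext j; simp [latticeVec, Matrix.mulVecLin_apply, Function.comp]
    have hli0 : LinearIndependent ℝ (fun j k => ((v j k : ℝ))) :=
      LinearIndependent.of_comp R3.mulVecLin (heq3 ▸ hli)
    have heq1 : (fun j => latticeVec R1 (v j)) =
        R1.mulVecLin ∘ (fun j k => ((v j k : ℝ))) := by
      funext j; simp [latticeVec, Matrix.mulVecLin_apply, Function.comp]
    rw [heq1]
    exact hli0.map' R1.mulVecLin (LinearMap.ker_eq_bot.2 (chol_inj h1))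
  have hnonempty : {r : ℝ | 0 ≤ r ∧ ∃ v : Fin i → (Fin n → ℤ),
      LinearIndependent ℝ (fun j => latticeVec R3 (v j)) ∧
      ∀ j, euclNorm (latticeVec R3 (v j)) ≤ r}.Nonempty := by
    set v : Fin i → (Fin n → ℤ) := fun j k => if k = Fin.castLE hin j then 1 else 0 with hv
    have hnn : ∀ j, 0 ≤ euclNorm (latticeVec R3 (v j)) := fun j => Real.sqrt_nonneg _
    refine ⟨∑ j, euclNorm (latticeVec R3 (v j)), Finset.sum_nonneg fun j _ => hnn j, v, ?_,
      fun j => Finset.single_le_sum (fun j _ => hnn j) (Finset.mem_univ j)⟩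
    have heq3 : (fun j => latticeVec R3 (v j)) =
        R3.mulVecLin ∘ (fun j => Pi.single (Fin.castLE hin j) (1 : ℝ)) := by
      funext j; funext k
      simp only [latticeVec, Matrix.mulVecLin_apply, Function.comp, hv]
      congr 1; funext l; simp [Pi.single_apply]
    rw [heq3]
    refine LinearIndependent.map' ?_ R3.mulVecLin (LinearMap.ker_eq_bot.2 (chol_inj h3))
    have := (Pi.basisFun ℝ (Fin n)).linearIndependent.comp
      (Fin.castLE hin) (Fin.castLE_injective hin)
    have h2 : (fun j => Pi.single (Fin.castLE hin j) (1 : ℝ)) =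
        ⇑(Pi.basisFun ℝ (Fin n)) ∘ Fin.castLE hin := by
      funext j; simp [Function.comp]
    rw [h2]; exact this
  exact csInf_le_csInf ⟨0, fun r hr => hr.1⟩ hnonempty subset
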